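/- Let n ≥ 2 be even and let (α, β) ∈ ℝ² with (α,β) ≠ (0,0). Set M = exp(αX + βY). Then the determinant of the top-right 2×2 block of M is strictly negative: M_{1,2n−1}·M_{2,2n} − M_{1,2n}·M_{2,2n−1} < 0 (indices 1-based). -/

import Mathlib

open Matrix

noncomputable section

def I2 : Matrix (Fin 2) (Fin 2) ℝ := !![1, 0; 0, 1]
def Tm : Matrix (Fin 2) (Fin 2) ℝ := !![1, 0; 0, -1]
def Rm : Matrix (Fin 2) (Fin 2) ℝ := !![0, -1; 1, 0]
def Pm : Matrix (Fin 2) (Fin 2) ℝ := !![0, 1; 1, 0]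

/-- `c_k = √(k(n−k))`. -/
def cc (n k : ℕ) : ℝ := Real.sqrt (k * (n - k : ℕ))

/-- The 2n×2n matrix, viewed as an n×n array of 2×2 blocks, whose only nonzero blocks are
`B k` at superdiagonal block positions (k, k+1) for 1-based `k = 1,…,n−1`. -/
def blkSup (n : ℕ) (B : ℕ → Matrix (Fin 2) (Fin 2) ℝ) :
    Matrix (Fin (2*n)) (Fin (2*n)) ℝ :=
  Matrix.of fun r c =>
    if (c:ℕ)/2 = (r:ℕ)/2 + 1 then
      B ((r:ℕ)/2 + 1) ⟨(r:ℕ) % 2, by omega⟩ ⟨(c:ℕ) % 2, by omega⟩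
    else 0

/-- The matrix `X` (n even): superdiagonal blocks `c_k I₂` for `k < n/2`,
`c_{n/2} T` at `k = n/2`, and `−c_k I₂` for `k > n/2`. -/
def Xeven (n : ℕ) : Matrix (Fin (2*n)) (Fin (2*n)) ℝ :=
  blkSup n (fun k =>
    if k < n/2 then cc n k • I2
    else if k = n/2 then cc n (n/2) • Tm
    else -(cc n k) • I2)

/-- The matrix `Y` (n even): superdiagonal blocks `c_k R` for `k ≠ n/2` and
`c_{n/2} P` at `k = n/2`. -/
def Yeven (n : ℕ) : Matrix (Fin (2*n)) (Fin (2*n)) ℝ :=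
  blkSup n (fun k => if k = n/2 then cc n (n/2) • Pm else cc n k • Rm)

/-- the 2×2 block `B_k = α X_k + β Y_k`. -/
def Bb (n : ℕ) (α β : ℝ) (k : ℕ) : Matrix (Fin 2) (Fin 2) ℝ :=
  α • (if k < n/2 then cc n k • I2
    else if k = n/2 then cc n (n/2) • Tm
    else -(cc n k) • I2) +
  β • (if k = n/2 then cc n (n/2) • Pm else cc n k • Rm)

lemma A_eq (n : ℕ) (α β : ℝ) :
    α • Xeven n + β • Yeven n = blkSup n (Bb n α β) := by
  ext r c
  simp only [Xeven, Yeven, blkSup, Bb, Matrix.add_apply, Matrix.smul_apply, Matrix.of_apply]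
  split_ifs <;> simp [Matrix.add_apply, Matrix.smul_apply]

/-- product of blocks B_1 ⋯ B_m -/
def prodB (n : ℕ) (α β : ℝ) : ℕ → Matrix (Fin 2) (Fin 2) ℝ
  | 0 => 1
  | m+1 => prodB n α β m * Bb n α β (m+1)

lemma blkSup_apply' (n : ℕ) (B : ℕ → Matrix (Fin 2) (Fin 2) ℝ)
    (j c : Fin (2*n)) (k : ℕ) (t s : Fin 2) (hk : 1 ≤ k)
    (hj : (j:ℕ) = 2*(k-1) + t) (hc : (c:ℕ) = 2*k + s) :
    blkSup n B j c = B k t s := by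
  simp only [blkSup, Matrix.of_apply]
  have := t.isLt; have := s.isLt
  rw [if_pos (by omega)]
  rw [show ((j:ℕ)/2 + 1) = k from by omega]
  congr 1 <;> exact Fin.ext (by simp; omega)

lemma pow_apply_eq_zero (n : ℕ) (B : ℕ → Matrix (Fin 2) (Fin 2) ℝ) (m : ℕ)
    (r c : Fin (2*n)) (h : (c:ℕ)/2 ≠ (r:ℕ)/2 + m) :
    ((blkSup n B) ^ m) r c = 0 := by
  induction m generalizing c with
  | zero =>
    simp only [pow_zero, Matrix.one_apply]
    rw [if_neg]
    rintro rfl; omega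
  | succ m ih =>
    rw [pow_succ, Matrix.mul_apply]
    apply Finset.sum_eq_zero
    intro j _
    by_cases hj : (j:ℕ)/2 = (r:ℕ)/2 + m
    · have : (blkSup n B) j c = 0 := by
        simp only [blkSup, Matrix.of_apply]
        rw [if_neg]; omega
      rw [this, mul_zero]
    · rw [ih j hj, zero_mul]

lemma pow_apply_blk (n : ℕ) (α β : ℝ) (m : ℕ) (hm : m < n)
    (r c : Fin (2*n)) (t s : Fin 2) (hr : (r:ℕ) = t) (hc : (c:ℕ) = 2*m + s) :
    ((blkSup n (Bb n α β)) ^ m) r c = prodB n α β m t s := by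
  induction m generalizing c s with
  | zero =>
    have hiff : (r = c) ↔ (t = s) := by
      rw [Fin.ext_iff, Fin.ext_iff]
      have := t.isLt; have := s.isLt; omega
    simp only [pow_zero, prodB, Matrix.one_apply]
    by_cases h : r = c
    · rw [if_pos h, if_pos (hiff.mp h)]
    · rw [if_neg h, if_neg (fun hh => h (hiff.mpr hh))]
  | succ m ih =>
    have h2m : 2*m < 2*n := by omega
    have h2m1 : 2*m+1 < 2*n := by omega
    have hab : (⟨2*m, h2m⟩ : Fin (2*n)) ≠ ⟨2*m+1, h2m1⟩ := by
      simp [Fin.ext_iff]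
    rw [pow_succ, Matrix.mul_apply]
    have key : ∀ j : Fin (2*n), j ∉ ({⟨2*m, h2m⟩, ⟨2*m+1, h2m1⟩} : Finset (Fin (2*n))) →
        ((blkSup n (Bb n α β)) ^ m) r j * (blkSup n (Bb n α β)) j c = 0 := by
      intro j hj
      simp only [Finset.mem_insert, Finset.mem_singleton, Fin.ext_iff] at hj
      have : (blkSup n (Bb n α β)) j c = 0 := by
        simp only [blkSup, Matrix.of_apply]
        rw [if_neg]
        have := s.isLt
        omega
      rw [this, mul_zero]
    rw [← Finset.sum_subset (Finset.subset_univ _) (fun x _ hx => key x hx),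
      Finset.sum_pair hab]
    have e0 : ((blkSup n (Bb n α β)) ^ m) r ⟨2*m, h2m⟩ = prodB n α β m t 0 :=
      ih (by omega) ⟨2*m, h2m⟩ 0 (by simp)
    have e1 : ((blkSup n (Bb n α β)) ^ m) r ⟨2*m+1, h2m1⟩ = prodB n α β m t 1 :=
      ih (by omega) ⟨2*m+1, h2m1⟩ 1 (by simp)
    have f0 : (blkSup n (Bb n α β)) ⟨2*m, h2m⟩ c = Bb n α β (m+1) 0 s :=
      blkSup_apply' n _ _ _ (m+1) 0 s (by omega) (by simp) hc
    have f1 : (blkSup n (Bb n α β)) ⟨2*m+1, h2m1⟩ c = Bb n α β (m+1) 1 s :=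
      blkSup_apply' n _ _ _ (m+1) 1 s (by omega) (by simp) hc
    rw [e0, e1, f0, f1]
    show _ = (prodB n α β m * Bb n α β (m+1)) t s
    rw [Matrix.mul_apply, Fin.sum_univ_two]

lemma pow_ge_zero (n : ℕ) (B : ℕ → Matrix (Fin 2) (Fin 2) ℝ) (k : ℕ) (hk : n ≤ k) :
    (blkSup n B) ^ k = 0 := by
  ext r c
  rw [pow_apply_eq_zero n B k r c (by have := c.isLt; omega)]
  simp

lemma exp_entry (n : ℕ) (hn : 2 ≤ n) (α β : ℝ) (r c : Fin (2*n)) (t s : Fin 2)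
    (hr : (r:ℕ) = t) (hc : (c:ℕ) = 2*(n-1) + s) :
    NormedSpace.exp (blkSup n (Bb n α β)) r c
      = (Nat.factorial (n-1) : ℝ)⁻¹ * prodB n α β (n-1) t s := by
  have hexp : NormedSpace.exp (blkSup n (Bb n α β))
      = ∑ k ∈ Finset.range n, (Nat.factorial k : ℝ)⁻¹ • (blkSup n (Bb n α β)) ^ k := by
    rw [NormedSpace.exp_eq_tsum (𝕂 := ℝ)]
    exact tsum_eq_sum (fun k hk =>
      by rw [pow_ge_zero n _ k (by simpa using hk)]; simp)
  rw [hexp]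
  rw [Matrix.sum_apply]
  rw [Finset.sum_eq_single (n-1)]
  · rw [Matrix.smul_apply, pow_apply_blk n α β (n-1) (by omega) r c t s hr hc, smul_eq_mul]
  · intro k hk hkne
    rw [Matrix.smul_apply,
      pow_apply_eq_zero n _ k r c (by have := t.isLt; have := s.isLt; omega)]
    simp
  · intro h
    exact absurd (Finset.mem_range.mpr (by omega)) h

lemma sq_cc (n k : ℕ) : cc n k ^ 2 = (k : ℝ) * ((n - k : ℕ) : ℝ) := by
  rw [cc, Real.sq_sqrt (by positivity)]

lemma det_Bb (n : ℕ) (α β : ℝ) (k : ℕ) :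
    (Bb n α β k).det
      = (if k = n/2 then (-1 : ℝ) else 1) * (cc n k ^ 2 * (α^2 + β^2)) := by
  unfold Bb
  by_cases h1 : k < n/2
  · rw [if_pos h1, if_neg (by omega), if_neg (by omega)]
    simp [Matrix.det_fin_two, I2, Rm, Matrix.add_apply, Matrix.smul_apply]
    ring
  · by_cases h2 : k = n/2
    · subst h2
      rw [if_neg h1, if_pos rfl, if_pos rfl, if_pos rfl]
      simp [Matrix.det_fin_two, Tm, Pm, Matrix.add_apply, Matrix.smul_apply]
      ring
    · rw [if_neg h1, if_neg h2, if_neg h2, if_neg h2]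
      simp [Matrix.det_fin_two, I2, Rm, Matrix.add_apply, Matrix.smul_apply]
      ring

lemma det_prodB (n : ℕ) (α β : ℝ) (m : ℕ) :
    (prodB n α β m).det = ∏ k ∈ Finset.range m, (Bb n α β (k+1)).det := by
  induction m with
  | zero => simp [prodB]
  | succ m ih => rw [prodB, Matrix.det_mul, ih, Finset.prod_range_succ]

lemma det_prodB_neg (n : ℕ) (hn : 2 ≤ n) (hne : Even n) (α β : ℝ)
    (hab : 0 < α^2 + β^2) :
    (prodB n α β (n-1)).det < 0 := by
  rw [det_prodB]
  have hmem : n/2 - 1 ∈ Finset.range (n-1) := by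
    rw [Finset.mem_range]; omega
  rw [← Finset.mul_prod_erase _ _ hmem]
  apply mul_neg_of_neg_of_pos
  · rw [det_Bb, if_pos (by omega), sq_cc]
    have h1 : (0:ℝ) < ((n/2 - 1 + 1 : ℕ) : ℝ) := by
      have : 1 ≤ n/2 - 1 + 1 := by omega
      exact_mod_cast Nat.lt_of_lt_of_le Nat.zero_lt_one this
    have h2 : (0:ℝ) < ((n - (n/2 - 1 + 1) : ℕ) : ℝ) := by
      have : 1 ≤ n - (n/2 - 1 + 1) := by omega
      exact_mod_cast Nat.lt_of_lt_of_le Nat.zero_lt_one this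
    nlinarith [mul_pos (mul_pos h1 h2) hab]
  · apply Finset.prod_pos
    intro k hk
    rw [Finset.mem_erase, Finset.mem_range] at hk
    rw [det_Bb, if_neg (by omega), sq_cc, one_mul]
    have h1 : (0:ℝ) < ((k + 1 : ℕ) : ℝ) := by positivity
    have h2 : (0:ℝ) < ((n - (k+1) : ℕ) : ℝ) := by
      have : 1 ≤ n - (k+1) := by omega
      exact_mod_cast Nat.lt_of_lt_of_le Nat.zero_lt_one this
    positivity

/-- For `n` even and `(α,β) ≠ (0,0)`, the determinant of the top-right 2×2 block of
`exp(αX + βY)` is strictly negative. -/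
theorem top_right_block_det_neg (n : ℕ) (hn : 2 ≤ n) (hne : Even n)
    (α β : ℝ) (hab : (α, β) ≠ (0, 0)) (M : Matrix (Fin (2*n)) (Fin (2*n)) ℝ)
    (hM : M = NormedSpace.exp (α • Xeven n + β • Yeven n)) :
    M ⟨0, by omega⟩ ⟨2*n - 2, by omega⟩ * M ⟨1, by omega⟩ ⟨2*n - 1, by omega⟩ -
      M ⟨0, by omega⟩ ⟨2*n - 1, by omega⟩ * M ⟨1, by omega⟩ ⟨2*n - 2, by omega⟩ < 0 := by
  have hAB : 0 < α^2 + β^2 := by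
    rcases eq_or_ne α 0 with rfl | hα
    · rcases eq_or_ne β 0 with rfl | hβ
      · exact absurd rfl hab
      · positivity
    · positivity
  rw [hM, A_eq]
  have e00 := exp_entry n hn α β ⟨0, by omega⟩ ⟨2*n - 2, by omega⟩ 0 0 rfl (by simp; omega)
  have e01 := exp_entry n hn α β ⟨0, by omega⟩ ⟨2*n - 1, by omega⟩ 0 1 rfl (by simp; omega)
  have e10 := exp_entry n hn α β ⟨1, by omega⟩ ⟨2*n - 2, by omega⟩ 1 0 rfl (by simp; omega)
  have e11 := exp_entry n hn α β ⟨1, by omega⟩ ⟨2*n - 1, by omega⟩ 1 1 rfl (by simp; omega)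
  rw [e00, e01, e10, e11]
  have hdet := det_prodB_neg n hn hne α β hAB
  rw [Matrix.det_fin_two] at hdet
  set P := prodB n α β (n-1)
  set q : ℝ := (Nat.factorial (n-1) : ℝ)⁻¹ with hq
  have hqpos : 0 < q := by
    rw [hq]; positivity
  calc q * P 0 0 * (q * P 1 1) - q * P 0 1 * (q * P 1 0)
      = q^2 * (P 0 0 * P 1 1 - P 0 1 * P 1 0) := by ring
    _ < 0 := mul_neg_of_pos_of_neg (by positivity) hdet

end
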